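/- For any positive integer a and any integer t, the fractional part satisfies -{t/a} = (1-a)/(2a) + (1/a) · Σ_{k=1}^{a-1} ω^{tk}/(1 - ω^{-k}), where ω = e^{2πi/a} is a primitive a-th root of unity. -/

import Mathlib

open Finset

private lemma aux_sum_mul (x : ℂ) (n : ℕ) :
    (x - 1) * ∑ m ∈ range n, (m : ℂ) * x ^ m
      = ((n : ℂ) - 1) * x ^ n - ∑ m ∈ range n, x ^ m + 1 := by
  induction n with
  | zero => simp
  | succ n ih =>
    rw [sum_range_succ, sum_range_succ (fun m => x ^ m), mul_add, ih]
    push_cast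
    ring

private lemma aux_inv (x : ℂ) (a : ℕ) (ha : 0 < a) (hx1 : x ≠ 1) (hxa : x ^ a = 1) :
    (1 - x)⁻¹ = -(1 / a) * ∑ m ∈ range a, (m : ℂ) * x ^ m := by
  have hgeom : ∑ m ∈ range a, x ^ m = 0 := by
    rw [geom_sum_eq hx1, hxa, sub_self, zero_div]
  have key : (x - 1) * ∑ m ∈ range a, (m : ℂ) * x ^ m = a := by
    rw [aux_sum_mul, hxa, hgeom]; ring
  have hx : (1 : ℂ) - x ≠ 0 := by
    intro h; apply hx1; linear_combination -h
  have ha' : (a : ℂ) ≠ 0 := Nat.cast_ne_zero.mpr ha.ne'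
  field_simp
  linear_combination -key

private lemma aux_orth (a : ℕ) (ω : ℂ) (hprim : IsPrimitiveRoot ω a) (j : ℤ) :
    ∑ k ∈ range a, ω ^ (j * (k : ℤ)) = if (a : ℤ) ∣ j then (a : ℂ) else 0 := by
  by_cases hdvd : (a : ℤ) ∣ j
  · have h1 : ∀ k ∈ range a, ω ^ (j * (k : ℤ)) = 1 := by
      intro k _
      rw [hprim.zpow_eq_one_iff_dvd]
      exact hdvd.mul_right k
    rw [sum_congr rfl h1]
    simp [hdvd]
  · have h1 : ω ^ j ≠ 1 := fun h => hdvd ((hprim.zpow_eq_one_iff_dvd j).mp h)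
    have h2 : ∀ k ∈ range a, ω ^ (j * (k : ℤ)) = (ω ^ j) ^ k := by
      intro k _; rw [← zpow_natCast (ω ^ j) k, ← zpow_mul]
    have h3 : (ω ^ j) ^ a = 1 := by
      rw [← zpow_natCast (ω ^ j) a, ← zpow_mul, mul_comm, zpow_mul,
        (hprim.zpow_eq_one_iff_dvd (a : ℤ)).mpr dvd_rfl, one_zpow]
    rw [sum_congr rfl h2, geom_sum_eq h1, h3, sub_self, zero_div]
    simp [hdvd]

theorem fract_discrete_fourier (a : ℕ) (ha : 0 < a) (t : ℤ) :
    (-(Int.fract ((t : ℝ) / (a : ℝ))) : ℂ)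
      = ((1 : ℂ) - (a : ℂ)) / (2 * (a : ℂ))
        + (1 / (a : ℂ)) * ∑ k ∈ Finset.Ico 1 a,
            Complex.exp (2 * Real.pi * Complex.I / (a : ℂ)) ^ (t * (k : ℤ)) /
              (1 - Complex.exp (2 * Real.pi * Complex.I / (a : ℂ)) ^ (-(k : ℤ))) := by
  set ω : ℂ := Complex.exp (2 * Real.pi * Complex.I / a) with hωdef
  have hprim : IsPrimitiveRoot ω a := Complex.isPrimitiveRoot_exp a ha.ne'
  have hω0 : ω ≠ 0 := Complex.exp_ne_zero _
  have haC : (a : ℂ) ≠ 0 := Nat.cast_ne_zero.mpr ha.ne'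
  have haZ : (0 : ℤ) < (a : ℤ) := by exact_mod_cast ha
  set r : ℕ := (t % (a : ℤ)).toNat with hrdef
  have hrt : (t % (a : ℤ)) = (r : ℤ) :=
    (Int.toNat_of_nonneg (Int.emod_nonneg t haZ.ne')).symm
  have hrlt : r < a := by
    have h := Int.emod_lt_of_pos t haZ
    rw [hrt] at h; exact_mod_cast h
  have hdvd_tr : (a : ℤ) ∣ t - (r : ℤ) := by
    rw [← hrt]; exact Int.dvd_self_sub_of_emod_eq rfl
  have hfr : Int.fract ((t : ℝ) / (a : ℝ)) = (r : ℝ) / a := by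
    rw [Int.fract_div_intCast_eq_div_intCast_mod, hrt]; push_cast; ring
  rw [hfr]
  -- replace t by r in exponents
  have hterm : ∀ k ∈ Ico 1 a, ω ^ (t * (k : ℤ)) / (1 - ω ^ (-(k : ℤ)))
      = ω ^ ((r : ℤ) * (k : ℤ)) / (1 - ω ^ (-(k : ℤ))) := by
    intro k _
    congr 1
    have h1 : ω ^ (t * (k : ℤ) - (r : ℤ) * (k : ℤ)) = 1 := by
      rw [hprim.zpow_eq_one_iff_dvd, ← sub_mul]
      exact hdvd_tr.mul_right _
    calc ω ^ (t * (k : ℤ))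
        = ω ^ ((r : ℤ) * (k : ℤ)) * ω ^ (t * (k : ℤ) - (r : ℤ) * (k : ℤ)) := by
          rw [← zpow_add₀ hω0]; ring_nf
      _ = ω ^ ((r : ℤ) * (k : ℤ)) := by rw [h1, mul_one]
  rw [sum_congr rfl hterm]
  -- rewrite each term via aux_inv
  have hterm2 : ∀ k ∈ Ico 1 a, ω ^ ((r : ℤ) * (k : ℤ)) / (1 - ω ^ (-(k : ℤ)))
      = -(1 / a) * ∑ m ∈ range a, (m : ℂ) * ω ^ (((r : ℤ) - (m : ℤ)) * (k : ℤ)) := by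
    intro k hk
    rw [mem_Ico] at hk
    have hx1 : ω ^ (-(k : ℤ)) ≠ 1 := by
      intro h
      have h2 := (hprim.zpow_eq_one_iff_dvd _).mp h
      rw [Int.dvd_neg] at h2
      have h3 := Int.le_of_dvd (by exact_mod_cast hk.1) h2
      have h4 : a ≤ k := by exact_mod_cast h3
      omega
    have hxa : (ω ^ (-(k : ℤ))) ^ a = 1 := by
      rw [← zpow_natCast, ← zpow_mul, hprim.zpow_eq_one_iff_dvd]
      exact ⟨-(k : ℤ), by ring⟩
    rw [div_eq_mul_inv, aux_inv _ a ha hx1 hxa, mul_left_comm, mul_sum]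
    congr 1
    refine sum_congr rfl fun m _ => ?_
    rw [mul_left_comm, ← zpow_natCast (ω ^ (-(k:ℤ))) m, ← zpow_mul, ← zpow_add₀ hω0]
    congr 2
    ring
  rw [sum_congr rfl hterm2, ← mul_sum, sum_comm]
  -- inner sums by orthogonality
  have hinner : ∀ m ∈ range a,
      ∑ k ∈ Ico 1 a, (m : ℂ) * ω ^ (((r : ℤ) - (m : ℤ)) * (k : ℤ))
        = (m : ℂ) * ((if m = r then (a : ℂ) else 0) - 1) := by
    intro m hm
    rw [mem_range] at hm
    rw [← mul_sum]
    congr 1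
    have horth := aux_orth a ω hprim ((r : ℤ) - (m : ℤ))
    rw [range_eq_Ico, sum_eq_sum_Ico_succ_bot ha] at horth
    have hcond : ((a : ℤ) ∣ (r : ℤ) - (m : ℤ)) ↔ m = r := by
      constructor
      · intro h
        have h0 : (r : ℤ) - (m : ℤ) = 0 := by
          refine Int.eq_zero_of_abs_lt_dvd h ?_
          rw [abs_lt]
          constructor <;> [push_cast; push_cast] <;> omega
        omega
      · intro h; rw [h]; simp
    simp only [hcond] at horth
    norm_num at horth
    linear_combination horth
  rw [sum_congr rfl hinner]
  have hG : (∑ m ∈ range a, (m : ℂ)) * 2 = (a : ℂ) * ((a : ℂ) - 1) := by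
    have h := Finset.sum_range_id_mul_two a
    have h2 := congrArg (Nat.cast : ℕ → ℂ) h
    push_cast [Nat.cast_sub ha] at h2
    exact h2
  have hS : ∑ m ∈ range a, (m : ℂ) = (a : ℂ) * ((a : ℂ) - 1) / 2 := by
    linear_combination hG / 2
  have hsum : ∑ m ∈ range a, (m : ℂ) * ((if m = r then (a : ℂ) else 0) - 1)
      = (r : ℂ) * a - ∑ m ∈ range a, (m : ℂ) := by
    rw [Finset.sum_congr rfl (fun m _ => by rw [mul_sub, mul_one, mul_ite, mul_zero]),
      Finset.sum_sub_distrib, Finset.sum_ite_eq' (range a) r]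
    simp [Finset.mem_range.mpr hrlt]
  rw [hsum, hS]
  push_cast
  field_simp
  ring
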